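/- arXiv:1706.04911 — 4 statements merged into one kernel-verified Lean document; each statement's English description precedes it below -/
import Mathlib

section
/- Let λ be an uncountable regular cardinal and let X = ∏_{α<λ} X_α be a product of compact metrizable spaces X_α each of which contains at least two points. Suppose Y ⊆ X satisfies that the projection of Y onto ∏_{α<β} X_α is all of ∏_{α<β} X_α for each β < λ. If S ⊆ Y is an HFD set in X, then S has a cluster point in Y, but no injective sequence of points of S converges in X. In particular, if Y itself is HFD in X, then Y is a countably compact dense subspace of X containing no non-trivial convergent sequences. -/
open Filter Topology Set


/-- A space is countably compact if every countable open cover has a finite subcover. -/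
def CountablyCompact (X : Type*) [TopologicalSpace X] : Prop :=
  ∀ U : ℕ → Set X, (∀ n, IsOpen (U n)) → (⋃ n, U n) = Set.univ →
    ∃ F : Finset ℕ, (⋃ n ∈ F, U n) = Set.univ

/-- `S ⊆ ∏_{α<λ} X α` (`λ = c.ord`) is finally dense if for some `β < λ` the projection of
`S` to the coordinates in `[β, λ)` is dense in `∏_{β ≤ α < λ} X α`. -/
def FinallyDenseP {c : Cardinal} {X : {o : Ordinal // o < c.ord} → Type*}
    [∀ i, TopologicalSpace (X i)] (S : Set (∀ i, X i)) : Prop :=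
  ∃ β < c.ord,
    Dense {g : ∀ i : {i : {o : Ordinal // o < c.ord} // β ≤ i.val}, X i.val |
      ∃ y ∈ S, ∀ i, g i = y i.val}

/-- An infinite subset of the product is HFD (hereditarily finally dense) if every infinite
subset of it is finally dense. -/
def IsHFDP {c : Cardinal} {X : {o : Ordinal // o < c.ord} → Type*}
    [∀ i, TopologicalSpace (X i)] (Y : Set (∀ i, X i)) : Prop :=
  Y.Infinite ∧ ∀ S ⊆ Y, S.Infinite → FinallyDenseP S


section HFDAux
variable {c : Cardinal} {X : {o : Ordinal // o < c.ord} → Type*} [∀ i, TopologicalSpace (X i)]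

/-- From density of the tail projection, hit finitely many nonempty open coordinate
constraints above the level. -/
lemma dense_tail_hit [∀ i, Nonempty (X i)] (δ : Ordinal) (B : Set (∀ i, X i))
    (hD : Dense {g : ∀ i : {i : {o : Ordinal // o < c.ord} // δ ≤ i.val}, X i.val |
      ∃ y ∈ B, ∀ i, g i = y i.val})
    (I : Finset {o : Ordinal // o < c.ord}) (hI : ∀ i ∈ I, δ ≤ i.val)
    (V : ∀ i, Set (X i)) (hVo : ∀ i ∈ I, IsOpen (V i)) (hVne : ∀ i ∈ I, (V i).Nonempty) :
    ∃ b ∈ B, ∀ i ∈ I, b i ∈ V i := by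
  classical
  set T := {i : {o : Ordinal // o < c.ord} // δ ≤ i.val}
  set O : Set (∀ i : T, X i.val) :=
    Set.pi {j : T | j.val ∈ I} (fun j => V j.val) with hO
  have hfin : {j : T | j.val ∈ I}.Finite := by
    have : {j : T | j.val ∈ I} = Subtype.val ⁻¹' (↑I : Set _) := rfl
    rw [this]
    exact (I.finite_toSet).preimage (Subtype.val_injective.injOn)
  have hOopen : IsOpen O := isOpen_set_pi hfin (fun j hj => hVo j.val hj)
  have hOne : O.Nonempty := by
    refine ⟨fun j => if h : j.val ∈ I then (hVne j.val h).choose else Classical.arbitrary _, ?_⟩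
    intro j hj
    simp only [mem_setOf_eq] at hj
    simp only [dif_pos hj]
    exact (hVne j.val hj).choose_spec
  obtain ⟨g, hgD, hgO⟩ := hD.exists_mem_open hOopen hOne
  obtain ⟨b, hbB, hbg⟩ := hgD
  refine ⟨b, hbB, fun i hi => ?_⟩
  have := hgO (⟨i, hI i hi⟩ : T) hi
  rw [hbg ⟨i, hI i hi⟩] at this
  exact this


lemma tail_idx_exists (hunc : Cardinal.aleph0 < c) {β : Ordinal} (hβ : β < c.ord) (n : ℕ) :
    β + (n : Ordinal) < c.ord := by
  rw [Cardinal.lt_ord, Ordinal.card_add]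
  refine Cardinal.add_lt_of_lt hunc.le ?_ ?_
  · exact Cardinal.lt_ord.mp hβ
  · exact lt_of_lt_of_le (by simpa using Cardinal.nat_lt_aleph0 n) hunc.le

/-- The tail product beyond any `β < c.ord` is uncountable. -/
lemma tail_uncountable (hunc : Cardinal.aleph0 < c) [∀ i, Nontrivial (X i)]
    {β : Ordinal} (hβ : β < c.ord) :
    ¬ Countable (∀ i : {i : {o : Ordinal // o < c.ord} // β ≤ i.val}, X i.val) := by
  classical
  intro hcnt
  set T := {i : {o : Ordinal // o < c.ord} // β ≤ i.val}
  -- injective ℕ → T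
  set e : ℕ → T := fun n => ⟨⟨β + n, tail_idx_exists hunc hβ n⟩, le_self_add⟩ with he
  have einj : Function.Injective e := by
    intro m n h
    have : β + (m : Ordinal) = β + (n : Ordinal) := congrArg (fun t : T => t.val.val) h
    have := (add_left_cancel_iff (a := β)).mp this
    exact_mod_cast this
  -- two distinct points in each coordinate
  have hpair : ∀ i : {o : Ordinal // o < c.ord}, ∃ p : X i × X i, p.1 ≠ p.2 := by
    intro i
    obtain ⟨u, v, huv⟩ := exists_pair_ne (X i)
    exact ⟨(u, v), huv⟩
  choose p hp using hpair
  -- injective (ℕ → Bool) → T-product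
  set f : (ℕ → Bool) → (∀ i : T, X i.val) := fun s j =>
    if h : ∃ n, e n = j then (if s h.choose then (p j.val).1 else (p j.val).2)
    else (p j.val).1 with hf
  have finj : Function.Injective f := by
    intro s t hst
    by_contra hne
    obtain ⟨n, hn⟩ := Function.ne_iff.mp hne
    have h1 : ∃ m, e m = e n := ⟨n, rfl⟩
    have hch : h1.choose = n := einj h1.choose_spec
    have hsn := congrFun hst (e n)
    rw [hf] at hsn
    simp only [dif_pos h1, hch] at hsn
    rcases Bool.eq_false_or_eq_true (s n) with hs | hs <;>
      rcases Bool.eq_false_or_eq_true (t n) with ht | ht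
    · exact hn (hs.trans ht.symm)
    · rw [hs, ht] at hsn; simp at hsn; exact hp _ hsn
    · rw [hs, ht] at hsn; simp at hsn; exact hp _ hsn.symm
    · exact hn (hs.trans ht.symm)
  have : Countable (ℕ → Bool) := Function.Injective.countable (f := f) finj
  obtain ⟨g, hg⟩ := exists_surjective_nat (ℕ → Bool)
  apply Function.cantor_surjective (fun n => {m | g n m = true})
  intro s
  obtain ⟨n, hn⟩ := hg (fun m => decide (m ∈ s))
  refine ⟨n, ?_⟩
  ext m
  simp [hn]


/-- No injective sequence inside an HFD set converges. -/
lemma hfd_no_conv (hunc : Cardinal.aleph0 < c) [∀ i, Nontrivial (X i)]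
    [∀ i, TopologicalSpace.MetrizableSpace (X i)]
    (S : Set (∀ i, X i)) (hS : IsHFDP S)
    (x : ℕ → ∀ i, X i) (hx : ∀ n, x n ∈ S) (hinj : Function.Injective x) :
    ¬ ∃ p, Filter.Tendsto x Filter.atTop (nhds p) := by
  rintro ⟨p, hp⟩
  set T := Set.range x with hT
  have hTS : T ⊆ S := range_subset_iff.mpr hx
  have hTinf : T.Infinite := Set.infinite_range_of_injective hinj
  obtain ⟨β, hβ, hD⟩ := hS.2 T hTS hTinf
  set Tl := {i : {o : Ordinal // o < c.ord} // β ≤ i.val}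
  set π : (∀ i, X i) → (∀ i : Tl, X i.val) := fun y i => y i.val with hπ
  have hπc : Continuous π := continuous_pi (fun i => continuous_apply i.val)
  have hconv : Filter.Tendsto (π ∘ x) Filter.atTop (nhds (π p)) :=
    ((hπc.tendsto p).comp hp)
  have hK : IsCompact (insert (π p) (Set.range (π ∘ x))) :=
    hconv.isCompact_insert_range
  have hKc : IsClosed (insert (π p) (Set.range (π ∘ x))) := hK.isClosed
  have hsub : {g : ∀ i : Tl, X i.val | ∃ y ∈ T, ∀ i, g i = y i.val}
      ⊆ insert (π p) (Set.range (π ∘ x)) := by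
    rintro g ⟨y, ⟨n, rfl⟩, hg⟩
    right
    exact ⟨n, by funext i; exact (hg i).symm⟩
  have huniv : (Set.univ : Set (∀ i : Tl, X i.val)) ⊆ insert (π p) (Set.range (π ∘ x)) := by
    rw [← hD.closure_eq]
    calc closure {g : ∀ i : Tl, X i.val | ∃ y ∈ T, ∀ i, g i = y i.val}
        ⊆ closure (insert (π p) (Set.range (π ∘ x))) := closure_mono hsub
      _ = _ := hKc.closure_eq
  have hcnt : Countable (∀ i : Tl, X i.val) := by
    rw [← Set.countable_univ_iff]
    exact Set.Countable.mono huniv ((Set.countable_range _).insert _)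
  exact tail_uncountable hunc hβ hcnt


/-- Every HFD subset of `Y` has a cluster point in `Y`. -/
lemma hfd_cluster (hreg : c.IsRegular) (hunc : Cardinal.aleph0 < c)
    [∀ i, CompactSpace (X i)] [∀ i, TopologicalSpace.MetrizableSpace (X i)]
    [∀ i, Nontrivial (X i)]
    (Y : Set (∀ i, X i))
    (hY : ∀ β < c.ord, ∀ g : ∀ i : {i : {o : Ordinal // o < c.ord} // i.val < β}, X i.val,
      ∃ y ∈ Y, ∀ i : {i : {o : Ordinal // o < c.ord} // i.val < β}, y i.val = g i)
    (S : Set (∀ i, X i)) (hSY : S ⊆ Y) (hS : IsHFDP S) :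
    ∃ y ∈ Y, AccPt y (Filter.principal S) := by
  classical
  have hc0 : (0 : Ordinal) < c.ord := by
    rw [Cardinal.lt_ord]; simpa using hreg.pos
  -- second countable bases
  have sc : ∀ i, SecondCountableTopology (X i) := fun i => by
    letI := TopologicalSpace.metrizableSpaceMetric (X i); infer_instance
  have hbas : ∀ i, ∃ bas : ℕ → Set (X i), (∀ n, IsOpen (bas n)) ∧
      ∀ U z, IsOpen U → z ∈ U → ∃ n, z ∈ bas n ∧ bas n ⊆ U := by
    intro i
    obtain ⟨b, hbc, hbne, hbb⟩ := @TopologicalSpace.exists_countable_basis (X i) _ (sc i)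
    have hne : b.Nonempty := by
      rcases Set.eq_empty_or_nonempty b with h | h
      · exfalso
        have h2 := hbb.sUnion_eq
        rw [h] at h2
        simp only [Set.sUnion_empty] at h2
        exact (Set.univ_nonempty (α := X i)).ne_empty h2.symm
      · exact h
    obtain ⟨f, hf⟩ := hbc.exists_eq_range hne
    refine ⟨f, fun n => hbb.isOpen (hf ▸ Set.mem_range_self n), fun U z hU hz => ?_⟩
    obtain ⟨v, hvb, hzv, hvU⟩ := hbb.exists_subset_of_mem_open hz hU
    rw [hf] at hvb
    obtain ⟨n, rfl⟩ := hvb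
    exact ⟨n, hzv, hvU⟩
  choose bas hbaso hbasb using hbas
  -- a countable injective sequence in S
  set a : ℕ → (∀ i, X i) := fun n => ((Set.Infinite.natEmbedding S hS.1 n : ↥S) : ∀ i, X i) with ha
  have hainj : Function.Injective a := fun m n h =>
    (Set.Infinite.natEmbedding S hS.1).injective (Subtype.val_injective h)
  have haS : ∀ n, a n ∈ S := fun n => (Set.Infinite.natEmbedding S hS.1 n).2
  set A : Set (∀ i, X i) := Set.range a with hA
  -- density level function
  have hFD : ∀ B : Set (∀ i, X i), ∃ β, β < c.ord ∧ ((B ⊆ S ∧ B.Infinite) →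
      Dense {g : ∀ i : {i : {o : Ordinal // o < c.ord} // β ≤ i.val}, X i.val |
        ∃ y ∈ B, ∀ i, g i = y i.val}) := by
    intro B
    by_cases h : B ⊆ S ∧ B.Infinite
    · obtain ⟨β, h1, h2⟩ := hS.2 B h.1 h.2
      exact ⟨β, h1, fun _ => h2⟩
    · exact ⟨0, hc0, fun hh => absurd hh h⟩
  choose lev hlev_lt hlev_dense using hFD
  -- coordinates from toType
  set coordOf : ∀ δ : {o : Ordinal // o < c.ord}, δ.val.ToType → {o : Ordinal // o < c.ord} :=
    fun δ t => ⟨((Ordinal.ToType.mk (o := δ.val)).symm t).val,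
      lt_trans (Set.mem_Iio.mp ((Ordinal.ToType.mk (o := δ.val)).symm t).2) δ.prop⟩ with hcoord
  -- shape sets
  set Bset : ∀ δ : {o : Ordinal // o < c.ord}, List (δ.val.ToType × ℕ) → List ℕ →
      Set (∀ i, X i) := fun δ L G =>
    {w | w ∈ A ∧ (∀ p ∈ L, w (coordOf δ p.1) ∈ bas (coordOf δ p.1) p.2) ∧
      ∀ k ∈ G, w ≠ a k} with hBset
  -- cardinality of the shape index
  have hcard : ∀ δ : {o : Ordinal // o < c.ord},
      Cardinal.mk (List (δ.val.ToType × ℕ) × List ℕ) < c := by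
    intro δ
    have hδc : δ.val.card < c := Cardinal.lt_ord.mp δ.prop
    have h1 : Cardinal.mk (δ.val.ToType × ℕ) < c := by
      rw [Cardinal.mk_prod]
      simp only [Cardinal.mk_toType, Cardinal.mk_nat, Cardinal.lift_aleph0, Cardinal.lift_id, Cardinal.lift_uzero]
      exact Cardinal.mul_lt_of_lt hreg.aleph0_le hδc hunc
    have h2 : Cardinal.mk (List (δ.val.ToType × ℕ)) < c :=
      lt_of_le_of_lt (Cardinal.mk_list_le_max _) (max_lt hunc h1)
    rw [Cardinal.mk_prod]
    have h3 : Cardinal.lift.{_, 0} (Cardinal.mk (List ℕ)) = Cardinal.aleph0 := by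
      simp [Cardinal.mk_denumerable]
    rw [h3]
    simp only [Cardinal.lift_uzero]
    exact Cardinal.mul_lt_of_lt hreg.aleph0_le h2 hunc
  -- step function
  have hstep : ∀ δ : {o : Ordinal // o < c.ord}, ∃ ε : {o : Ordinal // o < c.ord},
      δ.val < ε.val ∧ ∀ L G, lev (Bset δ L G) ≤ ε.val := by
    intro δ
    set s := iSup (fun q : List (δ.val.ToType × ℕ) × List ℕ => lev (Bset δ q.1 q.2)) with hs
    have hslt : s < c.ord := by
      refine Ordinal.iSup_lt_ord_lift ?_ (fun q => hlev_lt _)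
      rw [hreg.cof_eq]
      simpa using hcard δ
    have hsucc : δ.val + 1 < c.ord := (Cardinal.isSuccLimit_ord hreg.aleph0_le).succ_lt δ.prop
    refine ⟨⟨max s (δ.val + 1), max_lt hslt hsucc⟩, ?_, ?_⟩
    · have : δ.val < δ.val + 1 := by
        rw [Ordinal.add_one_eq_succ]; exact Order.lt_succ _
      exact lt_of_lt_of_le this (le_max_right _ _)
    · intro L G
      exact le_trans (Ordinal.le_iSup _ (L, G)) (le_max_left _ _)
  choose step hstep1 hstep2 using hstep
  -- the increasing ladder
  set β : ℕ → {o : Ordinal // o < c.ord} := fun n => step^[n] ⟨0, hc0⟩ with hβ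
  have hβsucc : ∀ n, β (n + 1) = step (β n) := fun n => Function.iterate_succ_apply' _ _ _
  have hβmono : Monotone (fun n => (β n).val) := by
    apply monotone_nat_of_le_succ
    intro n
    rw [hβsucc n]
    exact (hstep1 (β n)).le
  set βs := iSup (fun n => (β n).val) with hβs
  have hβs_lt : βs < c.ord := by
    refine Ordinal.iSup_lt_ord_lift ?_ (fun n => (β n).prop)
    rw [hreg.cof_eq]
    simpa using hunc
  have hβle : ∀ n, (β n).val ≤ βs := fun n => by rw [hβs]; exact Ordinal.le_iSup (fun n => (β n).val) n
  -- cluster point of the initial projections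
  set f : ℕ → (∀ i : {i : {o : Ordinal // o < c.ord} // i.val < βs}, X i.val) :=
    fun n i => a n i.val with hf
  obtain ⟨z, -, hz⟩ := (isCompact_univ
    (X := ∀ i : {i : {o : Ordinal // o < c.ord} // i.val < βs}, X i.val)).exists_clusterPt
    (f := Filter.map f Filter.atTop) (le_principal_iff.mpr Filter.univ_mem)
  obtain ⟨y, hyY, hy⟩ := hY βs hβs_lt z
  refine ⟨y, hyY, ?_⟩
  rw [accPt_iff_nhds]
  intro U hU
  obtain ⟨O, hOU, hOopen, hyO⟩ := mem_nhds_iff.mp hU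
  obtain ⟨I, u, hu, hpiO⟩ := (isOpen_pi_iff.mp hOopen) y hyO
  -- refine the open sets to basis elements
  have hν : ∀ i : {o : Ordinal // o < c.ord}, ∃ n : ℕ, i ∈ I →
      (y i ∈ bas i n ∧ bas i n ⊆ u i) := by
    intro i
    by_cases h : i ∈ I
    · obtain ⟨n, h1, h2⟩ := hbasb i (u i) (y i) (hu i h).1 (hu i h).2
      exact ⟨n, fun _ => ⟨h1, h2⟩⟩
    · exact ⟨0, fun hh => absurd hh h⟩
  choose ν hν using hν
  set I₁ := I.filter (fun i => i.val < βs) with hI₁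
  set I₂ := I.filter (fun i => ¬ i.val < βs) with hI₂
  -- find a level above all coordinates in I₁
  have hex : ∀ i : {o : Ordinal // o < c.ord}, ∃ m : ℕ, i ∈ I₁ → i.val < (β m).val := by
    intro i
    by_cases h : i ∈ I₁
    · have hlt : i.val < βs := (Finset.mem_filter.mp h).2
      rw [hβs, Ordinal.lt_iSup_iff] at hlt
      obtain ⟨m, hm⟩ := hlt
      exact ⟨m, fun _ => hm⟩
    · exact ⟨0, fun hh => absurd hh h⟩
  choose μ hμ using hex
  set N := I₁.sup μ with hN
  have hI₁lt : ∀ i ∈ I₁, i.val < (β N).val := fun i hi =>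
    lt_of_lt_of_le (hμ i hi) (hβmono (Finset.le_sup hi))
  -- the shape data
  set L : List ((β N).val.ToType × ℕ) := I₁.attach.toList.map
    (fun j => ((Ordinal.ToType.mk (o := (β N).val)) ⟨j.1.val, hI₁lt j.1 j.2⟩, ν j.1)) with hL
  set G : List ℕ := if h : ∃ k, a k = y then [h.choose] else [] with hG
  set B := Bset (β N) L G with hB
  have hround : ∀ (i : {o : Ordinal // o < c.ord}) (hi : i.val < (β N).val),
      coordOf (β N) ((Ordinal.ToType.mk (o := (β N).val)) ⟨i.val, hi⟩) = i := by
    intro i hi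
    apply Subtype.ext
    simp [hcoord]
  have hBmid : ∀ w : (∀ i, X i),
      (∀ p ∈ L, w (coordOf (β N) p.1) ∈ bas (coordOf (β N) p.1) p.2) ↔
      (∀ i ∈ I₁, w i ∈ bas i (ν i)) := by
    intro w
    constructor
    · intro h i hi
      have hmem : ((Ordinal.ToType.mk (o := (β N).val)) ⟨i.val, hI₁lt i hi⟩, ν i) ∈ L := by
        rw [hL]
        simp only [List.mem_map, Finset.mem_toList, Finset.mem_attach]
        exact ⟨⟨i, hi⟩, trivial, rfl⟩
      have := h _ hmem
      rwa [hround i (hI₁lt i hi)] at this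
    · intro h p hp
      rw [hL] at hp
      simp only [List.mem_map, Finset.mem_toList, Finset.mem_attach, true_and] at hp
      obtain ⟨j, rfl⟩ := hp
      rw [hround j.1 (hI₁lt j.1 j.2)]
      exact h j.1 j.2
  -- B is infinite
  have hWfin : {j : {i : {o : Ordinal // o < c.ord} // i.val < βs} | j.val ∈ I₁}.Finite := by
    have : {j : {i : {o : Ordinal // o < c.ord} // i.val < βs} | j.val ∈ I₁}
        = Subtype.val ⁻¹' (↑I₁ : Set _) := rfl
    rw [this]
    exact (I₁.finite_toSet).preimage (Subtype.val_injective.injOn)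
  set W := Set.pi {j : {i : {o : Ordinal // o < c.ord} // i.val < βs} | j.val ∈ I₁}
    (fun j => bas j.val (ν j.val)) with hW
  have hWopen : IsOpen W := isOpen_set_pi hWfin (fun j _ => hbaso _ _)
  have hWz : z ∈ W := by
    intro j hj
    have h1 : (β N).val ≤ βs := hβle N
    have hjI : j.val ∈ I := (Finset.mem_filter.mp hj).1
    rw [← hy j]
    exact (hν j.val hjI).1
  have hfreq : ∃ᶠ n in Filter.atTop, f n ∈ W := by
    have hmc : MapClusterPt z Filter.atTop f := hz
    exact mapClusterPt_iff_frequently.mp hmc W (hWopen.mem_nhds hWz)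
  have hNinf : {n : ℕ | f n ∈ W}.Infinite := by
    intro hfin
    obtain ⟨m, hm⟩ := hfin.bddAbove
    obtain ⟨n, hn, hnW⟩ := Filter.frequently_atTop.mp hfreq (m + 1)
    exact absurd (hm hnW) (by omega)
  have hGfin : ({n : ℕ | n ∈ G} : Set ℕ).Finite := G.finite_toSet
  have hBinf : B.Infinite := by
    have hsub2 : a '' ({n : ℕ | f n ∈ W} \ {n : ℕ | n ∈ G}) ⊆ B := by
      rintro w ⟨n, ⟨hnW, hnG⟩, rfl⟩
      refine ⟨Set.mem_range_self n, ?_, ?_⟩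
      · rw [hBmid]
        intro i hi
        have hlt : i.val < βs := (Finset.mem_filter.mp hi).2
        exact hnW ⟨i, hlt⟩ hi
      · intro k hk hak
        exact hnG (by rwa [hainj hak])
    exact Set.Infinite.mono hsub2 ((hNinf.diff hGfin).image hainj.injOn)
  have hBS : B ⊆ S := by
    rintro w ⟨⟨n, rfl⟩, -, -⟩
    exact haS n
  have hBlev : lev B ≤ βs := by
    have h1 := hstep2 (β N) L G
    rw [← hβsucc N] at h1
    exact le_trans h1 (hβle (N + 1))
  have hBd := hlev_dense B ⟨hBS, hBinf⟩
  obtain ⟨b, hbB, hb2⟩ := dense_tail_hit (lev B) B hBd I₂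
    (fun i hi => le_trans hBlev (not_lt.mp (Finset.mem_filter.mp hi).2))
    (fun i => bas i (ν i)) (fun i _ => hbaso _ _)
    (fun i hi => ⟨y i, (hν i (Finset.mem_filter.mp hi).1).1⟩)
  have hbU : b ∈ U := by
    apply hOU
    apply hpiO
    intro i hi
    rw [Finset.mem_coe] at hi
    by_cases h : i.val < βs
    · have hi1 : i ∈ I₁ := Finset.mem_filter.mpr ⟨hi, h⟩
      exact (hν i hi).2 ((hBmid b).mp hbB.2.1 i hi1)
    · have hi2 : i ∈ I₂ := Finset.mem_filter.mpr ⟨hi, h⟩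
      exact (hν i hi).2 (hb2 i hi2)
  refine ⟨b, ⟨hbU, hBS hbB⟩, ?_⟩
  intro hby
  obtain ⟨⟨j, rfl⟩, -, hGc⟩ := hbB
  have hexy : ∃ k, a k = y := ⟨j, hby⟩
  have hGeq : G = [hexy.choose] := by rw [hG, dif_pos hexy]
  have : a j ≠ a hexy.choose := hGc hexy.choose (by rw [hGeq]; exact List.mem_singleton.mpr rfl)
  exact this (by rw [hexy.choose_spec, ← hby])

end HFDAux

/-- Proposition (Dikranjan–Tkachenko): let `λ = c.ord` be an uncountable regular cardinal and
`X = ∏_{α<λ} X α` a product of compact metrizable spaces each with at least two points.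
Suppose `Y ⊆ X` projects onto `∏_{α<β} X α` for every `β < λ`. Then every HFD set `S ⊆ Y`
has a cluster point in `Y` but contains no injective sequence converging in `X`; in
particular, if `Y` itself is HFD then `Y` is a countably compact dense subspace of `X`
without non-trivial convergent sequences. -/
theorem hfd_cluster_and_countably_compact
    (c : Cardinal) (hreg : c.IsRegular) (hunc : Cardinal.aleph0 < c)
    (X : {o : Ordinal // o < c.ord} → Type*) [∀ i, TopologicalSpace (X i)]
    [∀ i, CompactSpace (X i)] [∀ i, TopologicalSpace.MetrizableSpace (X i)]
    [∀ i, Nontrivial (X i)]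
    (Y : Set (∀ i, X i))
    (hY : ∀ β < c.ord, ∀ g : ∀ i : {i : {o : Ordinal // o < c.ord} // i.val < β}, X i.val,
      ∃ y ∈ Y, ∀ i : {i : {o : Ordinal // o < c.ord} // i.val < β}, y i.val = g i) :
    (∀ S ⊆ Y, IsHFDP S →
      (∃ y ∈ Y, AccPt y (Filter.principal S)) ∧
      ∀ x : ℕ → (∀ i, X i), (∀ n, x n ∈ S) → Function.Injective x →
        ¬ ∃ p, Filter.Tendsto x Filter.atTop (nhds p)) ∧
    (IsHFDP Y →
      CountablyCompact ↥Y ∧ Dense Y ∧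
      ∀ x : ℕ → (∀ i, X i), (∀ n, x n ∈ Y) → Function.Injective x →
        ¬ ∃ p ∈ Y, Filter.Tendsto x Filter.atTop (nhds p)) := by
  classical
  have main : ∀ S ⊆ Y, IsHFDP S →
      (∃ y ∈ Y, AccPt y (Filter.principal S)) ∧
      ∀ x : ℕ → (∀ i, X i), (∀ n, x n ∈ S) → Function.Injective x →
        ¬ ∃ p, Filter.Tendsto x Filter.atTop (nhds p) := by
    intro S hSY hS
    exact ⟨hfd_cluster hreg hunc Y hY S hSY hS,
      fun x hx hinj => hfd_no_conv hunc S hS x hx hinj⟩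
  refine ⟨main, fun hYH => ⟨?_, ?_, ?_⟩⟩
  · -- countably compact
    intro U hUo hUc
    by_contra hnc
    push_neg at hnc
    have hpt : ∀ n : ℕ, ∃ ww : ↥Y, ww ∉ ⋃ k ∈ Finset.range (n + 1), U k := fun n =>
      (Set.ne_univ_iff_exists_notMem _).mp (hnc (Finset.range (n + 1)))
    choose w hw using hpt
    set T : Set (∀ i, X i) := Set.range (fun n => (w n : ∀ i, X i)) with hT
    by_cases hTf : T.Finite
    · haveI : Finite ↥T := hTf.to_subtype
      set g : ℕ → ↥T := fun n => ⟨(w n : ∀ i, X i), Set.mem_range_self n⟩ with hg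
      obtain ⟨v, hvinf⟩ := Finite.exists_infinite_fiber g
      have hset : (g ⁻¹' {v}).Infinite := Set.infinite_coe_iff.mp hvinf
      obtain ⟨n₀, hn₀⟩ := hset.nonempty
      have hmem : w n₀ ∈ ⋃ n, U n := by
        have := Set.mem_univ (w n₀)
        rwa [← hUc] at this
      obtain ⟨m, hm⟩ := Set.mem_iUnion.mp hmem
      have hge : ∃ n ∈ g ⁻¹' {v}, m ≤ n := by
        by_contra h
        push_neg at h
        exact hset (Set.Finite.subset (Set.finite_Iio m) (fun n hn => h n hn))
      obtain ⟨n, hnf, hmn⟩ := hge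
      have hww : w n = w n₀ := by
        have h1 : g n = g n₀ := by
          rw [Set.mem_preimage, Set.mem_singleton_iff] at hnf hn₀
          rw [hnf, hn₀]
        have h2 := congrArg Subtype.val h1
        exact Subtype.ext h2
      have hfin : w n ∈ U m := by rw [hww]; exact hm
      exact hw n (Set.mem_biUnion (Finset.mem_range.mpr (Nat.lt_succ_of_le hmn)) hfin)
    · have hTS : T ⊆ Y := by
        rintro _ ⟨n, rfl⟩
        exact (w n).2
      have hTH : IsHFDP T := ⟨hTf, fun B hB hBi => hYH.2 B (hB.trans hTS) hBi⟩
      obtain ⟨y, hyY, hacc⟩ := (main T hTS hTH).1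
      have hmem : (⟨y, hyY⟩ : ↥Y) ∈ ⋃ n, U n := by
        have := Set.mem_univ (⟨y, hyY⟩ : ↥Y)
        rwa [← hUc] at this
      obtain ⟨m, hm⟩ := Set.mem_iUnion.mp hmem
      obtain ⟨V, hVopen, hVeq⟩ := isOpen_induced_iff.mp (hUo m)
      have hyV : y ∈ V := by
        rw [← hVeq] at hm
        exact hm
      set E : Set (∀ i, X i) :=
        (↑((Finset.range m).image (fun k => (w k : ∀ i, X i))) : Set (∀ i, X i)) \ {y} with hE
      have hEfin : E.Finite := (Finset.finite_toSet _).diff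
      have hEc : IsClosed E := hEfin.isClosed
      have hVE : (V \ E) ∈ nhds y := by
        refine IsOpen.mem_nhds (hVopen.sdiff hEc) ⟨hyV, ?_⟩
        rw [hE]
        simp
      obtain ⟨s, ⟨⟨hsV, hsE⟩, hsT⟩, hsy⟩ := (accPt_iff_nhds (x := y) (C := T)).mp hacc (V \ E) hVE
      obtain ⟨n, hn⟩ := hsT
      have hnm : m ≤ n := by
        by_contra h
        push_neg at h
        apply hsE
        refine ⟨?_, hsy⟩
        rw [Finset.coe_image]
        exact ⟨n, by simpa using h, hn⟩
      have hfin : w n ∈ U m := by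
        rw [← hVeq]
        show ((w n : ∀ i, X i)) ∈ V
        rw [show ((w n : ∀ i, X i)) = s from hn]
        exact hsV
      exact hw n (Set.mem_biUnion (Finset.mem_range.mpr (Nat.lt_succ_of_le hnm)) hfin)
  · -- dense
    rw [dense_iff_inter_open]
    intro O hOopen hOne
    obtain ⟨x0, hx0⟩ := hOne
    obtain ⟨I, u, hu, hpi⟩ := isOpen_pi_iff.mp hOopen x0 hx0
    have hc0 : (0 : Ordinal) < c.ord := by
      rw [Cardinal.lt_ord]
      simpa using hreg.pos
    have hsup : I.sup (fun i => i.val) < c.ord :=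
      (Finset.sup_lt_iff (by simpa using hc0)).mpr (fun i _ => i.prop)
    have hγ : I.sup (fun i => i.val) + 1 < c.ord :=
      (Cardinal.isSuccLimit_ord hreg.aleph0_le).succ_lt hsup
    obtain ⟨y, hyY, hy⟩ := hY _ hγ (fun i => x0 i.val)
    refine ⟨y, ?_, hyY⟩
    apply hpi
    rw [Set.mem_pi]
    intro i hi
    rw [Finset.mem_coe] at hi
    have hiγ : i.val < I.sup (fun i => i.val) + 1 := by
      refine lt_of_le_of_lt (Finset.le_sup hi) ?_
      rw [Ordinal.add_one_eq_succ]
      exact Order.lt_succ _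
    rw [hy ⟨i, hiγ⟩]
    exact (hu i hi).2
  · rintro x hx hinj ⟨p, hpY, hp⟩
    exact (main Y subset_rfl hYH).2 x hx hinj ⟨p, hp⟩
end

section
/- Let k be a positive integer, let {x_μ : μ < 𝔠} ⊆ {0,1}^{ω₁}, and let G be the subgroup of the Boolean group {0,1}^{ω₁} generated by {x_μ : μ < 𝔠}. Suppose that for every m with 1 ≤ m ≤ k, every infinite subset C of ω, and every function h : m × C → [𝔠]^{<ω} such that the set {h(i,n) : i < m, n ∈ C} is linearly independent in the 𝔽₂-vector space [𝔠]^{<ω}, the sequence of m-tuples ((∑_{μ∈h(0,n)} x_μ, …, ∑_{μ∈h(m−1,n)} x_μ))_{n∈C} has an accumulation point in G^m. Then G^k is countably compact. -/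
/-- The ordinals below the initial ordinal of the continuum: an index set of cardinality `𝔠`. -/
abbrev ContIdx : Type 1 := {o : Ordinal // o < Cardinal.continuum.ord}

/-- The ordinals below `ω₁`. -/
abbrev Omega1Idx : Type 1 := {o : Ordinal // o < (Cardinal.aleph 1).ord}

/-- `{0,1}^{ω₁}` with the product topology and coordinatewise addition. -/
abbrev CantorOmega1 : Type 1 := Omega1Idx → ZMod 2

/-- The indicator of a finite subset of `γ`, an element of the `𝔽₂`-vector space
`γ →₀ ZMod 2`, which realizes the group `[γ]^{<ω}` of finite subsets of `γ`
under symmetric difference. -/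
noncomputable def finsetIndicator {γ : Type*} (F : Finset γ) : γ →₀ ZMod 2 :=
  ∑ x ∈ F, Finsupp.single x 1

/-- A subset of an `𝔽₂`-vector space is linearly independent. -/
def SetLinIndep {M : Type*} [AddCommGroup M] [Module (ZMod 2) M] (s : Set M) : Prop :=
  LinearIndependent (ZMod 2) ((↑) : s → M)




section Prelim
variable {V : Type*} [AddCommGroup V] [Module (ZMod 2) V]

lemma zmod2_ne_zero {a : ZMod 2} (h : a ≠ 0) : a = 1 := by revert a; decide

lemma neg_eq_self2 (v : V) : -v = v := by
  have h1 : (1 + 1 : ZMod 2) = 0 := by decide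
  have : v + v = 0 := by
    rw [← one_smul (ZMod 2) v, ← add_smul, h1, zero_smul]
  exact neg_eq_of_add_eq_zero_left this

lemma eq_add_of_add_eq2 {a s c : V} (h : a + s = c) : a = c + s := by
  rw [eq_sub_of_add_eq h, sub_eq_add_neg, neg_eq_self2]

lemma greedy {ι : Type*} [Fintype ι] (U : ℕ → ι → V) (D : Set ℕ) (hD : D.Infinite)
    (hB : ∀ lam : ι → ZMod 2, lam ≠ 0 → ∀ c : V,
      {n : ℕ | n ∈ D ∧ ∑ i, lam i • U n i = c}.Finite) :
    ∃ C : Set ℕ, C ⊆ D ∧ C.Infinite ∧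
      LinearIndependent (ZMod 2) ((↑) : {v : V | ∃ i n, n ∈ C ∧ v = U n i} → V) := by
  classical
  -- the set of vectors appearing for indices in a list
  set blockSet : List ℕ → Set V := fun l => {v : V | ∃ i q, q ∈ l ∧ v = U q i} with hblockSet
  have hblockFin : ∀ l, (blockSet l).Finite := by
    intro l
    have : blockSet l ⊆ (fun p : ι × ℕ => U p.2 p.1) '' (Set.univ ×ˢ {q | q ∈ l}) := by
      rintro v ⟨i, q, hq, rfl⟩
      exact ⟨(i, q), ⟨trivial, hq⟩, rfl⟩
    have hl : {q : ℕ | q ∈ l}.Finite := l.finite_toSet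
    exact Set.Finite.subset (Set.Finite.image _ (Set.Finite.prod Set.finite_univ hl)) this
  -- a good next index given previously chosen indices `l`
  set Good : List ℕ → ℕ → Prop := fun l n =>
    n ∈ D ∧ (∀ q ∈ l, q < n) ∧ ∀ lam : ι → ZMod 2, lam ≠ 0 →
      ∑ i, lam i • U n i ∉ Submodule.span (ZMod 2) (blockSet l) with hGood
  have hex : ∀ l : List ℕ, ∃ n, Good l n := by
    intro l
    haveI : Module.Finite (ZMod 2) (Submodule.span (ZMod 2) (blockSet l)) :=
      Module.Finite.span_of_finite (ZMod 2) (hblockFin l)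
    haveI : Finite (Submodule.span (ZMod 2) (blockSet l)) :=
      Module.finite_of_finite (ZMod 2)
    have hspanFin : ((Submodule.span (ZMod 2) (blockSet l) : Submodule (ZMod 2) V) :
        Set V).Finite := Set.toFinite _
    have hbad : (⋃ lam ∈ {lam : ι → ZMod 2 | lam ≠ 0},
        ⋃ c ∈ (Submodule.span (ZMod 2) (blockSet l) : Set V),
          {n : ℕ | n ∈ D ∧ ∑ i, lam i • U n i = c}).Finite := by
      refine Set.Finite.biUnion (Set.toFinite _) fun lam hlam => ?_
      exact Set.Finite.biUnion hspanFin fun c _ => hB lam hlam c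
    have hinf : (D \ _).Infinite := hD.diff hbad
    obtain ⟨n, hn, hgt⟩ := hinf.exists_gt (l.foldr max 0)
    refine ⟨n, hn.1, ?_, ?_⟩
    · intro q hq
      exact lt_of_le_of_lt (List.le_max_of_le hq le_rfl) hgt
    · intro lam hlam hmem
      exact hn.2 (Set.mem_biUnion hlam (Set.mem_biUnion hmem ⟨hn.1, rfl⟩))
  choose step hstep using hex
  set pre : ℕ → List ℕ := fun L => Nat.rec [] (fun _ ih => ih ++ [step ih]) L with hpre
  set a : ℕ → ℕ := fun L => step (pre L) with ha
  have hpre_succ : ∀ L, pre (L + 1) = pre L ++ [a L] := fun L => rfl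
  have hmem_pre : ∀ L q, q ∈ pre L ↔ ∃ l, l < L ∧ q = a l := by
    intro L
    induction L with
    | zero => intro q; simp [hpre]
    | succ L ih =>
      intro q
      rw [hpre_succ, List.mem_append, ih, List.mem_singleton]
      constructor
      · rintro (⟨l, hl, rfl⟩ | rfl)
        · exact ⟨l, Nat.lt_succ_of_lt hl, rfl⟩
        · exact ⟨L, Nat.lt_succ_self L, rfl⟩
      · rintro ⟨l, hl, rfl⟩
        rcases Nat.lt_succ_iff_lt_or_eq.1 hl with h | h
        · exact Or.inl ⟨l, h, rfl⟩
        · exact Or.inr (by rw [h])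
  have hGoodL : ∀ L, Good (pre L) (a L) := fun L => hstep (pre L)
  have hlt : ∀ {l L}, l < L → a l < a L := by
    intro l L hlL
    exact (hGoodL L).2.1 (a l) ((hmem_pre L (a l)).2 ⟨l, hlL, rfl⟩)
  have hainj : Function.Injective a := by
    intro l L h
    rcases lt_trichotomy l L with hc | hc | hc
    · exact absurd h (Nat.ne_of_lt (hlt hc))
    · exact hc
    · exact absurd h.symm (Nat.ne_of_lt (hlt hc))
  refine ⟨Set.range a, ?_, Set.infinite_range_of_injective hainj, ?_⟩
  · rintro n ⟨l, rfl⟩; exact (hGoodL l).1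
  -- independence
  have hblock_indep : ∀ L, LinearIndependent (ZMod 2) ((↑) : blockSet (pre L) → V) := by
    intro L
    induction L with
    | zero =>
      have : blockSet (pre 0) = ∅ := by
        ext v; simp [hblockSet, hpre]
      rw [this]
      exact linearIndependent_empty _ _
    | succ L ih =>
      have hsplit : blockSet (pre (L + 1)) =
          blockSet (pre L) ∪ Set.range (fun i => U (a L) i) := by
        ext v
        simp only [hblockSet, hpre_succ, List.mem_append, List.mem_singleton,
          Set.mem_setOf_eq, Set.mem_union, Set.mem_range]
        constructor
        · rintro ⟨i, q, hq | rfl, rfl⟩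
          · exact Or.inl ⟨i, q, hq, rfl⟩
          · exact Or.inr ⟨i, rfl⟩
        · rintro (⟨i, q, hq, rfl⟩ | ⟨i, rfl⟩)
          · exact ⟨i, q, Or.inl hq, rfl⟩
          · exact ⟨i, a L, Or.inr rfl, rfl⟩
      rw [hsplit]
      have hgood := (hGoodL L).2.2
      have hbatch : LinearIndependent (ZMod 2) (fun i => U (a L) i) := by
        rw [Fintype.linearIndependent_iff]
        intro g hg
        by_contra hne
        push_neg at hne
        have hgne : g ≠ 0 := by
          intro h0; obtain ⟨i, hi⟩ := hne; exact hi (by rw [h0]; rfl)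
        exact hgood g hgne (hg ▸ Submodule.zero_mem _)
      have hdisj : Disjoint (Submodule.span (ZMod 2) (blockSet (pre L)))
          (Submodule.span (ZMod 2) (Set.range fun i => U (a L) i)) := by
        rw [Submodule.disjoint_def]
        intro v hv1 hv2
        obtain ⟨g, rfl⟩ := (Submodule.mem_span_range_iff_exists_fun _).1 hv2
        by_cases hgz : g = 0
        · subst hgz; simp
        · exact absurd hv1 (hgood g hgz)
      exact LinearIndepOn.id_union ih ((linearIndepOn_id_range_iff hbatch.injective).mpr hbatch) hdisj
  have hS : {v : V | ∃ i n, n ∈ Set.range a ∧ v = U n i} = ⋃ L, blockSet (pre L) := by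
    ext v
    simp only [Set.mem_setOf_eq, Set.mem_iUnion, hblockSet]
    constructor
    · rintro ⟨i, n, ⟨l, rfl⟩, rfl⟩
      exact ⟨l + 1, i, a l, (hmem_pre (l+1) (a l)).2 ⟨l, Nat.lt_succ_self l, rfl⟩, rfl⟩
    · rintro ⟨L, i, q, hq, rfl⟩
      obtain ⟨l, _, rfl⟩ := (hmem_pre L q).1 hq
      exact ⟨i, a l, ⟨l, rfl⟩, rfl⟩
  rw [hS]
  refine linearIndepOn_iUnion_of_directed (v := id) ?_ hblock_indep
  have hmono : Monotone fun L => blockSet (pre L) := by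
    intro L L' hLL'
    rintro v ⟨i, q, hq, rfl⟩
    obtain ⟨l, hl, rfl⟩ := (hmem_pre L q).1 hq
    exact ⟨i, a l, (hmem_pre L' (a l)).2 ⟨l, lt_of_lt_of_le hl hLL', rfl⟩, rfl⟩
  exact hmono.directed_le

end Prelim

section Decomp
variable {V : Type*} [AddCommGroup V] [Module (ZMod 2) V]

lemma decomp : ∀ (N : ℕ) (ι : Type) [Fintype ι], Fintype.card ι ≤ N →
    ∀ (U : ℕ → ι → V) (D : Set ℕ), D.Infinite →
    ∃ (C : Set ℕ) (m : ℕ) (t : Fin m → ℕ → V) (c : ι → V) (A : ι → Fin m → ZMod 2),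
      C ⊆ D ∧ C.Infinite ∧ m ≤ Fintype.card ι ∧
      LinearIndependent (ZMod 2)
        ((↑) : {v : V | ∃ (j : Fin m) (n : ℕ), n ∈ C ∧ v = t j n} → V) ∧
      ∀ n ∈ C, ∀ i, U n i = c i + ∑ j, A i j • t j n := by
  intro N
  induction N with
  | zero =>
    intro ι _ hcard U D hD
    have : IsEmpty ι := Fintype.card_eq_zero_iff.1 (Nat.le_zero.1 hcard)
    refine ⟨D, 0, fun j => (Fin.elim0 j : ℕ → V), fun i => this.elim i, fun i => this.elim i,
      le_rfl, hD, Nat.zero_le _, ?_, fun n _ i => this.elim i⟩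
    have : {v : V | ∃ (j : Fin 0) (n : ℕ), n ∈ D ∧ v = (Fin.elim0 j : ℕ → V) n} = ∅ := by
      ext v; simp [Fin.elim0]
    rw [this]
    exact linearIndependent_empty _ _
  | succ N IH =>
    intro ι _ hcard U D hD
    classical
    by_cases hB : ∀ lam : ι → ZMod 2, lam ≠ 0 → ∀ c : V,
        {n : ℕ | n ∈ D ∧ ∑ i, lam i • U n i = c}.Finite
    · -- independent case: m = card ι
      obtain ⟨C, hCD, hCinf, hind⟩ := greedy U D hD hB
      set m := Fintype.card ι with hm
      set e : Fin m ≃ ι := (Fintype.equivFin ι).symm with he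
      refine ⟨C, m, fun j n => U n (e j), fun _ => 0,
        fun i j => if e j = i then 1 else 0, hCD, hCinf, le_rfl, ?_, ?_⟩
      · have : {v : V | ∃ (j : Fin m) (n : ℕ), n ∈ C ∧ v = U n (e j)} =
            {v : V | ∃ i n, n ∈ C ∧ v = U n i} := by
          ext v
          constructor
          · rintro ⟨j, n, hn, rfl⟩; exact ⟨e j, n, hn, rfl⟩
          · rintro ⟨i, n, hn, rfl⟩; exact ⟨e.symm i, n, hn, by rw [e.apply_symm_apply]⟩
        rw [this]; exact hind
      · intro n hn i
        rw [zero_add]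
        simp only [ite_smul, one_smul, zero_smul]
        rw [Fintype.sum_equiv e (fun j => if e j = i then U n (e j) else 0)
          (fun i' : ι => if i' = i then U n i' else 0) (fun j => rfl)]
        simp
    · -- dependent case
      push_neg at hB
      obtain ⟨lam, hlam, cst, hfib⟩ := hB
      obtain ⟨i₀, hi₀⟩ : ∃ i, lam i ≠ 0 := by
        by_contra hno; push_neg at hno
        exact hlam (funext fun i => hno i)
      have hlam1 : lam i₀ = 1 := zmod2_ne_zero hi₀
      set C₀ : Set ℕ := {n : ℕ | n ∈ D ∧ ∑ i, lam i • U n i = cst} with hC₀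
      have hC₀D : C₀ ⊆ D := fun n hn => hn.1
      have hcard' : Fintype.card {i : ι // i ≠ i₀} ≤ N := by
        rw [Fintype.card_subtype_compl (· = i₀)]  -- may need adjusting
        have h1 : Fintype.card {i : ι // i = i₀} = 1 := Fintype.card_subtype_eq i₀
        omega
      obtain ⟨C, m, t, c', A', hCC₀, hCinf, hm, hind, hform⟩ :=
        IH {i : ι // i ≠ i₀} hcard' (fun n i' => U n i'.val) C₀ hfib
      refine ⟨C, m, t,
        (fun i => if h : i = i₀ then cst + ∑ i' : {i : ι // i ≠ i₀}, lam i'.val • c' i'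
          else c' ⟨i, h⟩),
        (fun i j => if h : i = i₀ then ∑ i' : {i : ι // i ≠ i₀}, lam i'.val * A' i' j
          else A' ⟨i, h⟩ j),
        fun n hn => hC₀D (hCC₀ hn), hCinf, le_trans hm (by
          rw [Fintype.card_subtype_compl (· = i₀), Fintype.card_subtype_eq i₀]; omega),
        hind, ?_⟩
      intro n hn i
      by_cases h : i = i₀
      · subst h
        simp only [dif_pos rfl]
        -- pivot computation
        have hrel : ∑ i, lam i • U n i = cst := (hCC₀ hn).2
        have hsplit : lam i • U n i + ∑ i' : {j : ι // j ≠ i}, lam i'.val • U n i'.val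
            = ∑ j, lam j • U n j := by
          rw [← Finset.add_sum_erase Finset.univ _ (Finset.mem_univ i)]
          congr 1
          exact (Finset.sum_subtype (Finset.univ.erase i)
            (fun x => by simp [Finset.mem_erase]) (fun j => lam j • U n j)).symm
        rw [hlam1, one_smul] at hsplit
        have hpivot : U n i = cst + ∑ i' : {j : ι // j ≠ i}, lam i'.val • U n i'.val :=
          eq_add_of_add_eq2 (hsplit.trans hrel)
        rw [hpivot]
        have hsub : ∀ i' : {j : ι // j ≠ i}, U n i'.val = c' i' + ∑ j, A' i' j • t j n :=
          fun i' => hform n hn i'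
        calc cst + ∑ i' : {j : ι // j ≠ i}, lam i'.val • U n i'.val
            = cst + ∑ i' : {j : ι // j ≠ i}, (lam i'.val • c' i'
                + ∑ j, lam i'.val • (A' i' j • t j n)) := by
              congr 1
              refine Finset.sum_congr rfl fun i' _ => ?_
              rw [hsub i', smul_add, Finset.smul_sum]
          _ = (cst + ∑ i' : {j : ι // j ≠ i}, lam i'.val • c' i')
                + ∑ j, (∑ i' : {j : ι // j ≠ i}, lam i'.val * A' i' j) • t j n := by
              rw [Finset.sum_add_distrib, ← add_assoc]
              congr 1
              rw [Finset.sum_comm]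
              refine Finset.sum_congr rfl fun j _ => ?_
              rw [Finset.sum_smul]
              refine Finset.sum_congr rfl fun i' _ => ?_
              rw [smul_smul]
      · simp only [dif_neg h]
        exact hform n hn ⟨i, h⟩

end Decomp

lemma finsetIndicator_support {γ : Type*} (w : γ →₀ ZMod 2) :
    finsetIndicator w.support = w := by
  classical
  ext μ
  rw [finsetIndicator, Finsupp.finset_sum_apply]
  simp only [Finsupp.single_apply]
  rw [Finset.sum_ite_eq' w.support μ (fun _ => (1 : ZMod 2))]
  by_cases h : μ ∈ w.support
  · rw [if_pos h]
    exact (zmod2_ne_zero (Finsupp.mem_support_iff.1 h)).symm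
  · rw [if_neg h]
    exact (Finsupp.notMem_support_iff.1 h).symm

lemma lincomb_indicator {γ M : Type*} [AddCommGroup M] [Module (ZMod 2) M]
    (f : γ → M) (F : Finset γ) :
    Finsupp.linearCombination (ZMod 2) f (finsetIndicator F) = ∑ a ∈ F, f a := by
  rw [finsetIndicator, map_sum]
  exact Finset.sum_congr rfl fun a _ => by
    rw [Finsupp.linearCombination_single, one_smul]

lemma cc_of_cluster {X : Type*} [TopologicalSpace X]
    (H : ∀ y : ℕ → X, ∃ q : X, ∀ W ∈ nhds q, {n | y n ∈ W}.Infinite) :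
    CountablyCompact X := by
  intro U hU hcover
  by_contra hfin
  push_neg at hfin
  have hch : ∀ n : ℕ, ∃ z : X, z ∉ ⋃ j ∈ Finset.range (n + 1), U j := fun n =>
    (Set.ne_univ_iff_exists_notMem _).1 (hfin (Finset.range (n + 1)))
  choose y hy using hch
  obtain ⟨q, hq⟩ := H y
  have hqU : q ∈ ⋃ n, U n := hcover ▸ Set.mem_univ q
  obtain ⟨N, hN⟩ := Set.mem_iUnion.1 hqU
  obtain ⟨n, hn, hNn⟩ := (hq (U N) ((hU N).mem_nhds hN)).exists_gt N
  exact hy n (Set.mem_biUnion (Finset.mem_range.2 (by omega)) hn)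

lemma nhds_pi_subtype {k : ℕ} {Z : Type*} [TopologicalSpace Z] {s : Set Z}
    (q : Fin k → s) (W : Set (Fin k → s)) (hW : W ∈ nhds q) :
    ∃ V ∈ nhds (fun i => (q i : Z)), ∀ z : Fin k → s, (fun i => (z i : Z)) ∈ V → z ∈ W := by
  rw [nhds_pi] at hW
  obtain ⟨I, If, tt, htt, hsub⟩ := Filter.mem_pi.1 hW
  have h2 : ∀ i, ∃ v ∈ nhds ((q i : Z)), Subtype.val ⁻¹' v ⊆ tt i := by
    intro i
    have h3 := htt i
    rw [nhds_subtype] at h3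
    exact Filter.mem_comap.1 h3
  choose v hv hvsub using h2
  refine ⟨I.pi v, set_pi_mem_nhds If (fun i _ => hv i), fun z hz => hsub fun i hi => ?_⟩
  exact hvsub i (hz i hi)

/-- Let `k` be positive, `{x μ : μ < 𝔠} ⊆ {0,1}^{ω₁}` and let `G` be the subgroup generated
by the `x μ`. Suppose that for every `1 ≤ m ≤ k`, every infinite `C ⊆ ω` and every
`h : m × C → [𝔠]^{<ω}` with `{h i n : i < m, n ∈ C}` linearly independent in the
`𝔽₂`-vector space `[𝔠]^{<ω}`, the sequence `((∑_{μ ∈ h i n} x μ)_{i<m})_{n ∈ C}` has an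
accumulation point in `G^m`. Then `G^k` is countably compact. -/
theorem countablyCompact_power_of_accumulation
    (k : ℕ) (hk : 0 < k) (x : ContIdx → CantorOmega1)
    (hacc : ∀ m : ℕ, 1 ≤ m → m ≤ k → ∀ C : Set ℕ, C.Infinite →
      ∀ h : ℕ → ℕ → Finset ContIdx,
        SetLinIndep {v : ContIdx →₀ ZMod 2 |
          ∃ i n, i < m ∧ n ∈ C ∧ v = finsetIndicator (h i n)} →
        ∃ p : Fin m → CantorOmega1,
          (∀ i : Fin m, p i ∈ AddSubgroup.closure (Set.range x)) ∧
          ∀ V ∈ nhds p,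
            {n : ℕ | n ∈ C ∧ (fun i : Fin m => ∑ μ ∈ h i.val n, x μ) ∈ V}.Infinite) :
    CountablyCompact (Fin k → ↥(AddSubgroup.closure (Set.range x))) := by
  classical
  set G := AddSubgroup.closure (Set.range x) with hG
  set xbar : (ContIdx →₀ ZMod 2) →ₗ[ZMod 2] CantorOmega1 :=
    Finsupp.linearCombination (ZMod 2) x with hxbar
  have hmemG : ∀ w : ContIdx →₀ ZMod 2, xbar w ∈ G := by
    intro w
    rw [← finsetIndicator_support w]
    rw [hxbar]
    rw [lincomb_indicator]
    exact AddSubgroup.sum_mem _ fun μ _ => AddSubgroup.subset_closure ⟨μ, rfl⟩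
  have hrep : ∀ g ∈ G, ∃ w, g = xbar w := by
    intro g hg
    induction hg using AddSubgroup.closure_induction with
    | mem g hgs =>
      obtain ⟨μ, rfl⟩ := hgs
      exact ⟨Finsupp.single μ 1, by rw [hxbar, Finsupp.linearCombination_single, one_smul]⟩
    | zero => exact ⟨0, by rw [map_zero]⟩
    | add g g' _ _ ihg ihg' =>
      obtain ⟨w, rfl⟩ := ihg
      obtain ⟨w', rfl⟩ := ihg'
      exact ⟨w + w', by rw [map_add]⟩
    | neg g _ ih =>
      obtain ⟨w, rfl⟩ := ih
      exact ⟨-w, by rw [map_neg]⟩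
  apply cc_of_cluster
  intro y
  have hrep2 : ∀ (n : ℕ) (i : Fin k), ∃ w, ((y n i : CantorOmega1)) = xbar w :=
    fun n i => hrep _ (y n i).2
  choose v hv using hrep2
  obtain ⟨C, m, t, c, A, hCD, hCinf, hm, hind, hform⟩ :=
    decomp k (Fin k) (le_of_eq (Fintype.card_fin k)) v Set.univ Set.infinite_univ
  by_cases hm0 : m = 0
  · subst hm0
    refine ⟨fun i => ⟨xbar (c i), hmemG _⟩, ?_⟩
    intro W hW
    have hyq : ∀ n ∈ C, y n = fun i => (⟨xbar (c i), hmemG _⟩ : G) := by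
      intro n hn
      funext i
      apply Subtype.ext
      have hf := hform n hn i
      simp only [Finset.univ_eq_empty, Finset.sum_empty, add_zero] at hf
      rw [show ((y n i : CantorOmega1)) = xbar (v n i) from hv n i, hf]
    refine Set.Infinite.mono ?_ hCinf
    intro n hn
    show y n ∈ W
    rw [hyq n hn]
    exact mem_of_mem_nhds hW
  · have hm1 : 1 ≤ m := Nat.one_le_iff_ne_zero.2 hm0
    have hmk : m ≤ k := by simpa using hm
    set h : ℕ → ℕ → Finset ContIdx :=
      fun i n => if hi : i < m then (t ⟨i, hi⟩ n).support else ∅ with hh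
    have hsets : {w : ContIdx →₀ ZMod 2 |
        ∃ i n, i < m ∧ n ∈ C ∧ w = finsetIndicator (h i n)} =
        {w : ContIdx →₀ ZMod 2 | ∃ (j : Fin m) (n : ℕ), n ∈ C ∧ w = t j n} := by
      ext w
      constructor
      · rintro ⟨i, n, hi, hn, rfl⟩
        refine ⟨⟨i, hi⟩, n, hn, ?_⟩
        rw [hh]
        simp only [dif_pos hi]
        rw [finsetIndicator_support]
      · rintro ⟨j, n, hn, rfl⟩
        refine ⟨j.val, n, j.isLt, hn, ?_⟩
        rw [hh]
        simp only [dif_pos j.isLt, Fin.eta]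
        rw [finsetIndicator_support]
    obtain ⟨p, hpG, hp⟩ := hacc m hm1 hmk C hCinf h (by rw [SetLinIndep, hsets]; exact hind)
    set T : (Fin m → CantorOmega1) → (Fin k → CantorOmega1) :=
      fun p' i => xbar (c i) + ∑ j, A i j • p' j with hT
    have hTcont : Continuous T := by
      apply continuous_pi
      intro i
      apply Continuous.add continuous_const
      apply continuous_finset_sum (f := fun j (a : Fin m → CantorOmega1) => A i j • a j) Finset.univ
      intro j _
      rcases eq_or_ne (A i j) 0 with hA | hA
      · simp only [hA, zero_smul]
        exact continuous_const
      · rw [zmod2_ne_zero hA]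
        simp only [one_smul]
        exact continuous_apply j
    have hq'G : ∀ i, T p i ∈ G := by
      intro i
      refine AddSubgroup.add_mem _ (hmemG _) (AddSubgroup.sum_mem _ fun j _ => ?_)
      rcases eq_or_ne (A i j) 0 with hA | hA
      · rw [hA, zero_smul]; exact AddSubgroup.zero_mem _
      · rw [zmod2_ne_zero hA, one_smul]; exact hpG j
    refine ⟨fun i => ⟨T p i, hq'G i⟩, ?_⟩
    intro W hW
    obtain ⟨V, hV, hVW⟩ := nhds_pi_subtype _ W hW
    have hTV : T ⁻¹' V ∈ nhds p := hTcont.continuousAt.preimage_mem_nhds hV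
    have hinf := hp (T ⁻¹' V) hTV
    refine Set.Infinite.mono ?_ hinf
    rintro n ⟨hnC, hnV⟩
    show y n ∈ W
    have htup : (fun j : Fin m => ∑ μ ∈ h j.val n, x μ) = fun j => xbar (t j n) := by
      funext j
      have h1 := lincomb_indicator x ((t j n).support)
      rw [finsetIndicator_support] at h1
      rw [hh]
      simp only [dif_pos j.isLt, Fin.eta]
      exact h1.symm
    have hyn : (fun i => ((y n i : CantorOmega1))) = T (fun j => xbar (t j n)) := by
      funext i
      rw [hv n i, hform n hnC i, hT]
      simp only [map_add, map_sum, map_smul]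
    apply hVW
    show (fun i => ((y n i : CantorOmega1))) ∈ V
    rw [hyn]
    rw [htup] at hnV
    exact hnV
end

section
/- Let G be a non-discrete Hausdorff topological abelian group in which every element g satisfies g + g = 0 (identity 0), and let k be a positive integer. Then there is a countable family {U_n : n < ω} of nonempty open subsets of G^{k+1} such that for every choice of points x_n ∈ U_n (n < ω), the set {x_n(i) : i ≤ k, n < ω} of coordinates is linearly independent in G. -/
open Topology Filter


/-- A subset `S` of a Boolean group is linearly independent if `0 ∉ S` and the sum of every
nonempty finite subset of `S` is nonzero. -/
def BoolIndep {G : Type*} [AddCommGroup G] (S : Set G) : Prop :=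
  0 ∉ S ∧ ∀ F : Finset G, ↑F ⊆ S → F.Nonempty → ∑ g ∈ F, g ≠ 0

/-- Let `G` be a non-discrete Hausdorff topological Boolean group and let `k` be a positive
integer. Then there is a countable family `{U n : n < ω}` of nonempty open subsets of
`G^(k+1)` such that whenever `x n ∈ U n` for each `n < ω`, the set
`{x n (i) : i ≤ k, n < ω}` of coordinates is linearly independent in `G`. -/
theorem exists_open_family_forcing_independence (G : Type*) [AddCommGroup G]
    [TopologicalSpace G] [IsTopologicalAddGroup G] [T2Space G]
    (hnd : ¬ DiscreteTopology G) (hbool : ∀ g : G, g + g = 0) (k : ℕ) (hk : 0 < k) :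
    ∃ U : ℕ → Set (Fin (k + 1) → G), (∀ n, IsOpen (U n)) ∧ (∀ n, (U n).Nonempty) ∧
      ∀ x : ℕ → (Fin (k + 1) → G), (∀ n, x n ∈ U n) →
        BoolIndep {g : G | ∃ (n : ℕ) (i : Fin (k + 1)), g = x n i} := by
  classical
  -- in every open neighbourhood of 0 there is a nonzero element
  have hnz : ∀ V : Set G, IsOpen V → (0 : G) ∈ V → ∃ g ∈ V, g ≠ 0 := by
    intro V hV h0
    by_contra h
    push_neg at h
    have hV0 : V = ({0} : Set G) := by
      apply subset_antisymm
      · intro y hy; simpa using h y hy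
      · intro y hy; simp only [Set.mem_singleton_iff] at hy; subst hy; exact h0
    exact hnd (discreteTopology_iff_isOpen_singleton_zero.mpr (hV0 ▸ hV))
  -- the key one-step construction
  have step : ∀ V : Set G, IsOpen V → (0 : G) ∈ V → ∃ g : G, ∃ W : Set G,
      g ∈ V ∧ g ≠ 0 ∧ IsOpen W ∧ (0 : G) ∈ W ∧
      (∀ a b : G, a ∈ W → b ∈ W → a + b ∈ V) ∧
      (∀ a b c : G, a ∈ W → b ∈ W → c ∈ W → a + b + c ≠ g) := by
    intro V hV h0
    obtain ⟨g, hgV, hg0⟩ := hnz V hV h0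
    have hc : ({g}ᶜ : Set G) ∈ 𝓝 (0 : G) :=
      isOpen_compl_singleton.mem_nhds (by simpa using Ne.symm hg0)
    obtain ⟨A, hA, hA2⟩ := exists_nhds_zero_half hc
    obtain ⟨B, hB, hB2⟩ := exists_nhds_zero_half hA
    obtain ⟨C, hC, hC2⟩ := exists_nhds_zero_half (hV.mem_nhds h0)
    obtain ⟨W, hWsub, hWopen, hW0⟩ :=
      mem_nhds_iff.mp (Filter.inter_mem (Filter.inter_mem hA hB) hC)
    refine ⟨g, W, hgV, hg0, hWopen, hW0, ?_, ?_⟩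
    · intro a b ha hb
      exact hC2 _ (hWsub ha).2 _ (hWsub hb).2
    · intro a b c ha hb hc'
      have h1 : a + b ∈ A := hB2 _ (hWsub ha).1.2 _ (hWsub hb).1.2
      have h2 : (a + b) + c ∈ ({g}ᶜ : Set G) := hA2 _ h1 _ (hWsub hc').1.1
      simpa using h2
  choose! gf Wf hgmem hgne hWopen hW0 hWadd hWtrip using step
  -- the decreasing sequence of neighbourhoods of 0
  let Vn : ℕ → Set G := fun n => Nat.rec Set.univ (fun _ acc => Wf acc) n
  have hVsucc : ∀ n, Vn (n + 1) = Wf (Vn n) := fun n => rfl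
  have hInv : ∀ n, IsOpen (Vn n) ∧ (0 : G) ∈ Vn n := by
    intro n
    induction n with
    | zero => exact ⟨isOpen_univ, trivial⟩
    | succ n ih =>
      rw [hVsucc]
      exact ⟨hWopen _ ih.1 ih.2, hW0 _ ih.1 ih.2⟩
  set gs : ℕ → G := fun n => gf (Vn n) with hgs
  have hgV : ∀ n, gs n ∈ Vn n := fun n => hgmem _ (hInv n).1 (hInv n).2
  have hg0 : ∀ n, gs n ≠ 0 := fun n => hgne _ (hInv n).1 (hInv n).2
  have hadd : ∀ n, ∀ a b : G, a ∈ Vn (n + 1) → b ∈ Vn (n + 1) → a + b ∈ Vn n := by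
    intro n a b ha hb
    rw [hVsucc] at ha hb
    exact hWadd _ (hInv n).1 (hInv n).2 a b ha hb
  have htrip : ∀ n, ∀ a b c : G, a ∈ Vn (n + 1) → b ∈ Vn (n + 1) → c ∈ Vn (n + 1) →
      a + b + c ≠ gs n := by
    intro n a b c ha hb hc
    rw [hVsucc] at ha hb hc
    exact hWtrip _ (hInv n).1 (hInv n).2 a b c ha hb hc
  have hmono1 : ∀ n, Vn (n + 1) ⊆ Vn n := by
    intro n a ha
    have := hadd n a 0 ha (hInv (n + 1)).2
    simpa using this
  have hmono : ∀ m n, m ≤ n → Vn n ⊆ Vn m := by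
    intro m n hmn
    induction n, hmn using Nat.le_induction with
    | base => exact subset_rfl
    | succ n hmn ih => exact (hmono1 n).trans ih
  -- the open sets from which points will be chosen
  set Ws : ℕ → Set G := fun n => Vn n ∩ (fun y => gs n + y) ⁻¹' Vn (n + 1) with hWs
  have hWsopen : ∀ n, IsOpen (Ws n) :=
    fun n => (hInv n).1.inter ((hInv (n + 1)).1.preimage (continuous_add_left _))
  have hWsne : ∀ n, gs n ∈ Ws n := by
    intro n
    refine ⟨hgV n, ?_⟩
    simp only [Set.mem_preimage, hbool (gs n)]
    exact (hInv (n + 1)).2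
  -- tail sums are small
  have tail : ∀ (z : ℕ → G), (∀ m, z m ∈ Vn m) → ∀ S : Finset ℕ, ∀ t : ℕ,
      (∀ m ∈ S, t ≤ m) → ∃ a b : G, a ∈ Vn t ∧ b ∈ Vn t ∧ ∑ m ∈ S, z m = a + b := by
    intro z hz S
    induction S using Finset.strongInduction with
    | _ S ih =>
      intro t ht
      rcases S.eq_empty_or_nonempty with rfl | hSne
      · exact ⟨0, 0, (hInv t).2, (hInv t).2, by simp⟩
      · set s := S.min' hSne with hs
        have hsS : s ∈ S := S.min'_mem hSne
        have hts : t ≤ s := ht s hsS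
        obtain ⟨a, b, ha, hb, hab⟩ := ih (S.erase s) (Finset.erase_ssubset hsS) (s + 1)
          (by
            intro m hm
            have h1 : m ∈ S := Finset.mem_of_mem_erase hm
            have h2 : m ≠ s := Finset.ne_of_mem_erase hm
            exact Nat.lt_of_le_of_ne (S.min'_le m h1) (Ne.symm h2))
        refine ⟨z s, a + b, hmono t s hts (hz s), hmono t s hts (hadd s a b ha hb), ?_⟩
        rw [← Finset.add_sum_erase _ _ hsS, hab]
  -- any selection from the `Ws` has all nonempty finite subset sums nonzero
  have main : ∀ (z : ℕ → G), (∀ m, z m ∈ Ws m) → ∀ S : Finset ℕ, S.Nonempty →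
      ∑ m ∈ S, z m ≠ 0 := by
    intro z hz S hSne h0
    set s := S.min' hSne with hs
    have hsS : s ∈ S := S.min'_mem hSne
    obtain ⟨a, b, ha, hb, hab⟩ := tail z (fun m => (hz m).1) (S.erase s) (s + 1)
      (by
        intro m hm
        exact Nat.lt_of_le_of_ne (S.min'_le m (Finset.mem_of_mem_erase hm))
          (Ne.symm (Finset.ne_of_mem_erase hm)))
    have hd : gs s + z s ∈ Vn (s + 1) := (hz s).2
    have hx0 : z s + (a + b) = 0 := by
      rw [← hab, Finset.add_sum_erase _ _ hsS]
      exact h0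
    have hkey : gs s + z s + a + b = gs s := by
      have h1 : gs s + z s + a + b = gs s + (z s + (a + b)) := by abel
      rw [h1, hx0, add_zero]
    exact htrip s _ _ _ hd ha hb hkey
  -- encode pairs into ℕ and assemble
  refine ⟨fun n => {y : Fin (k + 1) → G | ∀ i : Fin (k + 1), y i ∈ Ws (n * (k + 1) + i)},
    ?_, ?_, ?_⟩
  · intro n
    dsimp only
    have hset : {y : Fin (k + 1) → G | ∀ i : Fin (k + 1), y i ∈ Ws (n * (k + 1) + i)} =
        ⋂ i : Fin (k + 1), (fun y : Fin (k + 1) → G => y i) ⁻¹' Ws (n * (k + 1) + i) := by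
      ext y; simp
    rw [hset]
    exact isOpen_iInter_of_finite fun i => (hWsopen _).preimage (continuous_apply i)
  · intro n
    exact ⟨fun i => gs (n * (k + 1) + i), fun i => hWsne _⟩
  · intro x hx
    -- the diagonal selection
    set z : ℕ → G := fun m => x (m / (k + 1)) ⟨m % (k + 1), Nat.mod_lt _ (Nat.succ_pos k)⟩
      with hzdef
    have hz : ∀ m, z m ∈ Ws m := by
      intro m
      have h := hx (m / (k + 1)) ⟨m % (k + 1), Nat.mod_lt _ (Nat.succ_pos k)⟩
      have hm : m / (k + 1) * (k + 1) + m % (k + 1) = m := Nat.div_add_mod' m (k + 1)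
      simpa [hzdef, hm] using h
    have hzx : ∀ (n : ℕ) (i : Fin (k + 1)), z (n * (k + 1) + i) = x n i := by
      intro n i
      have hdiv : (n * (k + 1) + (i : ℕ)) / (k + 1) = n := by
        rw [mul_comm n (k + 1), Nat.mul_add_div (Nat.succ_pos k),
          Nat.div_eq_of_lt i.isLt, add_zero]
      have hmod : (n * (k + 1) + (i : ℕ)) % (k + 1) = (i : ℕ) := by
        rw [mul_comm n (k + 1), Nat.mul_add_mod, Nat.mod_eq_of_lt i.isLt]
      simp only [hzdef, hdiv, hmod]
    constructor
    · rintro ⟨n, i, h0⟩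
      have := main z hz {n * (k + 1) + (i : ℕ)} ⟨_, Finset.mem_singleton_self _⟩
      rw [Finset.sum_singleton, hzx n i] at this
      exact this h0.symm
    · intro F hF hFne h0
      have hmem : ∀ g : G, ∃ m : ℕ, g ∈ F → z m = g := by
        intro g
        by_cases hg : g ∈ F
        · obtain ⟨n, i, rfl⟩ := hF hg
          exact ⟨n * (k + 1) + i, fun _ => hzx n i⟩
        · exact ⟨0, fun h => absurd h hg⟩
      choose e he using hmem
      have hinj : ∀ g1 ∈ F, ∀ g2 ∈ F, e g1 = e g2 → g1 = g2 := by
        intro g1 h1 g2 h2 hee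
        rw [← he g1 h1, hee, he g2 h2]
      have hsum : ∑ m ∈ F.image e, z m = ∑ g ∈ F, g := by
        rw [Finset.sum_image hinj]
        exact Finset.sum_congr rfl fun g hg => he g hg
      exact main z hz (F.image e) (hFne.image e) (hsum.trans h0)
end

section
/- Let G be a non-discrete Hausdorff topological abelian group in which every element g satisfies g + g = 0, with identity 0. Then there exists a sequence (W_n)_{n<ω} of nonempty open subsets of G such that 0 ∉ ∑_{n∈F} W_n for every nonempty finite subset F of ω, where ∑_{n∈F} W_n = { ∑_{n∈F} w_n : w_n ∈ W_n for each n ∈ F }. -/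
open Set Filter Pointwise

/-- In a non-discrete topological additive group, every neighborhood of `0`
contains a nonzero element. -/
lemma aux_exists_ne_zero_mem {G : Type*} [AddGroup G] [TopologicalSpace G]
    [IsTopologicalAddGroup G] (hnd : ¬ DiscreteTopology G) {U : Set G} (hU : U ∈ nhds 0) :
    ∃ x ∈ U, x ≠ 0 := by
  by_contra h
  push_neg at h
  have hsub : U ⊆ {0} := fun x hx => h x hx
  have h0 : ({0} : Set G) ∈ nhds (0 : G) := Filter.mem_of_superset hU hsub
  have : IsOpen ({0} : Set G) := by
    rcases mem_nhds_iff.mp h0 with ⟨V, hV, hVo, h0V⟩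
    have : V = {0} := Set.Subset.antisymm hV (Set.singleton_subset_iff.mpr h0V)
    rwa [this] at hVo
  exact hnd (discreteTopology_iff_isOpen_singleton_zero.mpr this)

/-- One step of the construction: given a neighborhood `V` of `0`, produce a nonzero
point `x ∈ V` and a smaller open neighborhood `V'` with `V' + V' ⊆ V` and
`x ∉ V' + V' + V' + V'`. -/
lemma aux_step {G : Type*} [AddGroup G] [TopologicalSpace G]
    [IsTopologicalAddGroup G] [T2Space G] (hnd : ¬ DiscreteTopology G) {V : Set G}
    (hV : V ∈ nhds 0) :
    ∃ x : G, ∃ V' : Set G, x ∈ V ∧ x ≠ 0 ∧ IsOpen V' ∧ (0 : G) ∈ V' ∧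
      V' + V' ⊆ V ∧ x ∉ V' + V' + V' + V' := by
  obtain ⟨x, hxV, hx0⟩ := aux_exists_ne_zero_mem hnd hV
  have hopen : ({x}ᶜ : Set G) ∈ nhds (0 : G) :=
    (isOpen_compl_singleton).mem_nhds (by simp [Ne.symm hx0])
  have hUV : ({x}ᶜ ∩ V : Set G) ∈ nhds (0 : G) := Filter.inter_mem hopen hV
  obtain ⟨S, hS, hS4⟩ := exists_nhds_zero_quarter hUV
  refine ⟨x, interior S, hxV, hx0, isOpen_interior, mem_interior_iff_mem_nhds.mpr hS, ?_, ?_⟩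
  · rintro z ⟨a, ha, b, hb, rfl⟩
    have := hS4 (interior_subset ha) (interior_subset hb) (mem_of_mem_nhds hS)
      (mem_of_mem_nhds hS)
    simpa using this.2
  · rintro ⟨c, ⟨d, ⟨a, ha, b, hb, rfl⟩, e, he, rfl⟩, f, hf, rfl⟩
    have := hS4 (interior_subset ha) (interior_subset hb) (interior_subset he)
      (interior_subset hf)
    exact this.1 rfl

/-- Sums over a finite set of indices `≥ k` of elements of a decreasing "doubling"
system of neighborhoods land in `U k + U k`. -/
lemma aux_sum_mem {G : Type*} [AddCommGroup G] (U : ℕ → Set G)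
    (h0 : ∀ n, (0 : G) ∈ U n) (hd : ∀ n, U (n + 1) + U (n + 1) ⊆ U n) :
    ∀ J : Finset ℕ, ∀ k : ℕ, (∀ j ∈ J, k ≤ j) → ∀ f : ℕ → G, (∀ j ∈ J, f j ∈ U j) →
      ∑ j ∈ J, f j ∈ U k + U k := by
  have hmono : ∀ a b : ℕ, a ≤ b → U b ⊆ U a := by
    have h1 : ∀ n, U (n + 1) ⊆ U n := by
      intro n y hy
      have := hd n (Set.add_mem_add hy (h0 (n + 1)))
      simpa using this
    intro a b hab
    induction hab with
    | refl => exact subset_rfl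
    | step _ ih => exact (h1 _).trans ih
  intro J
  induction J using Finset.strongInduction with
  | _ J ih =>
    intro k hk f hf
    rcases J.eq_empty_or_nonempty with rfl | hJ
    · simpa using Set.add_mem_add (h0 k) (h0 k)
    · set m := J.min' hJ with hm
      have hmJ : m ∈ J := J.min'_mem hJ
      have hsum : f m + ∑ j ∈ J.erase m, f j = ∑ j ∈ J, f j :=
        Finset.add_sum_erase _ _ hmJ
      have hrec : ∑ j ∈ J.erase m, f j ∈ U (m + 1) + U (m + 1) := by
        refine ih (J.erase m) (Finset.erase_ssubset hmJ) (m + 1) ?_ f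
          (fun j hj => hf j (Finset.mem_of_mem_erase hj))
        intro j hj
        have hne : j ≠ m := Finset.ne_of_mem_erase hj
        have : m ≤ j := J.min'_le j (Finset.mem_of_mem_erase hj)
        omega
      have h1 : f m ∈ U k := hmono k m (hk m hmJ) (hf m hmJ)
      have h2 : ∑ j ∈ J.erase m, f j ∈ U k := hmono k m (hk m hmJ) (hd m hrec)
      rw [← hsum]
      exact Set.add_mem_add h1 h2

/-- Let `G` be a non-discrete Hausdorff topological abelian group in which every element `g`
satisfies `g + g = 0`. Then there exists a sequence `(W n)` of nonempty open subsets of `G`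
such that `0 ∉ ∑_{n ∈ F} W n` for every nonempty finite `F ⊆ ω`, i.e. no choice of points
`w n ∈ W n` (for `n ∈ F`) sums to `0`. -/
theorem exists_open_sets_sums_avoid_zero (G : Type*) [AddCommGroup G] [TopologicalSpace G]
    [IsTopologicalAddGroup G] [T2Space G] (hnd : ¬ DiscreteTopology G)
    (hbool : ∀ g : G, g + g = 0) :
    ∃ W : ℕ → Set G, (∀ n, IsOpen (W n)) ∧ (∀ n, (W n).Nonempty) ∧
      ∀ F : Finset ℕ, F.Nonempty → ∀ w : ℕ → G, (∀ n ∈ F, w n ∈ W n) →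
        ∑ n ∈ F, w n ≠ 0 := by
  classical
  -- the one-step choice function on neighborhoods of 0
  have hstep : ∀ V : {S : Set G // S ∈ nhds (0 : G)},
      ∃ p : G × {S : Set G // S ∈ nhds (0 : G)},
        p.1 ∈ V.1 ∧ p.1 ≠ 0 ∧ IsOpen p.2.1 ∧ p.2.1 + p.2.1 ⊆ V.1 ∧
          p.1 ∉ p.2.1 + p.2.1 + p.2.1 + p.2.1 := by
    intro V
    obtain ⟨x, V', hxV, hx0, hV'o, h0V', hsub, hnot⟩ := aux_step hnd V.2
    exact ⟨(x, ⟨V', hV'o.mem_nhds h0V'⟩), hxV, hx0, hV'o, hsub, hnot⟩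
  choose p hp1 hp2 hp3 hp4 hp5 using hstep
  -- iterate
  let seq : ℕ → {S : Set G // S ∈ nhds (0 : G)} := fun n =>
    Nat.rec ⟨Set.univ, Filter.univ_mem⟩ (fun _ q => (p q).2) n
  have hseq : ∀ n, seq (n + 1) = (p (seq n)).2 := fun n => rfl
  set U : ℕ → Set G := fun n => (seq n).1 with hU
  set x : ℕ → G := fun n => (p (seq n)).1 with hx
  have hUnhds : ∀ n, U n ∈ nhds (0 : G) := fun n => (seq n).2
  have hU0 : ∀ n, (0 : G) ∈ U n := fun n => mem_of_mem_nhds (hUnhds n)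
  have hxU : ∀ n, x n ∈ U n := fun n => hp1 (seq n)
  have hxne : ∀ n, x n ≠ 0 := fun n => hp2 (seq n)
  have hUopen : ∀ n, IsOpen (U (n + 1)) := fun n => hp3 (seq n)
  have hdbl : ∀ n, U (n + 1) + U (n + 1) ⊆ U n := fun n => hp4 (seq n)
  have hxnot : ∀ n, x n ∉ U (n + 1) + U (n + 1) + U (n + 1) + U (n + 1) :=
    fun n => hp5 (seq n)
  refine ⟨fun n => (x n + ·) '' U (n + 1), ?_, ?_, ?_⟩
  · intro n
    exact (Homeomorph.addLeft (x n)).isOpenMap _ (hUopen n)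
  · intro n
    exact ⟨x n + 0, ⟨0, hU0 (n + 1), rfl⟩⟩
  · intro F hF w hw hsum0
    -- decompose w n = x n + u n
    set u : ℕ → G := fun n => w n - x n with hu
    have hwu : ∀ n ∈ F, w n = x n + u n := by
      intro n hn; simp [hu]
    have huU : ∀ n ∈ F, u n ∈ U (n + 1) := by
      intro n hn
      obtain ⟨v, hv, hvw⟩ := hw n hn
      have : u n = v := by simp only [hu]; rw [← hvw]; abel_nf; simp [neg_add_eq_sub]
      rwa [this]
    set m := F.min' hF with hm
    have hmF : m ∈ F := F.min'_mem hF
    -- split the sum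
    have hsplit : ∑ n ∈ F, w n = x m + ((∑ n ∈ F.erase m, x n) + (∑ n ∈ F, u n)) := by
      rw [Finset.sum_congr rfl hwu, Finset.sum_add_distrib,
        ← Finset.add_sum_erase _ x hmF]
      abel
    set A := ∑ n ∈ F.erase m, x n with hA
    set B := ∑ n ∈ F, u n with hB
    have hAB0 : x m + (A + B) = 0 := by rw [← hsplit]; exact hsum0
    have hxAB : x m = A + B := by
      have h1 : x m + (A + B) + (A + B) = 0 + (A + B) := by rw [hAB0]
      rwa [add_assoc, hbool (A + B), add_zero, zero_add] at h1
    -- A ∈ U (m+1) + U (m+1)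
    have hAmem : A ∈ U (m + 1) + U (m + 1) := by
      refine aux_sum_mem U hU0 hdbl (F.erase m) (m + 1) ?_ x
        (fun j hj => hxU j)
      intro j hj
      have hne : j ≠ m := Finset.ne_of_mem_erase hj
      have : m ≤ j := F.min'_le j (Finset.mem_of_mem_erase hj)
      omega
    -- B ∈ U (m+1) + U (m+1)
    have hBmem : B ∈ U (m + 1) + U (m + 1) := by
      have := aux_sum_mem (fun n => U (n + 1)) (fun n => hU0 (n + 1))
        (fun n => hdbl (n + 1)) F m (fun j hj => F.min'_le j hj) u huU
      simpa using this
    have : x m ∈ U (m + 1) + U (m + 1) + U (m + 1) + U (m + 1) := by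
      rw [hxAB]
      have h4 : A + B ∈ U (m + 1) + U (m + 1) + (U (m + 1) + U (m + 1)) :=
        Set.add_mem_add hAmem hBmem
      rwa [← add_assoc] at h4
    exact hxnot m this
end
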